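/- arXiv:2103.05819 — 6 statements merged into one kernel-verified Lean document; each statement's English description precedes it below -/
import Mathlib

section
/- Derivative of the matrix exponential (integral form): for n×n real matrices A and B, the function t ↦ exp(A + t·B) is differentiable at t = 0, and its derivative equals ∫₀¹ exp(s·A) · B · exp((1−s)·A) ds. -/
open Filter NormedSpace intervalIntegral

section LinftyAux

attribute [local instance] Matrix.linftyOpNormedRing Matrix.linftyOpNormedAlgebra

lemma matrix_exp_aux_cont (n : ℕ) (A B : Matrix (Fin n) (Fin n) ℝ) :
    Continuous (Function.uncurry fun t s : ℝ =>
      exp (s • (A + t • B)) * B * exp ((1 - s) • A)) := by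
  have he : Continuous (fun M : Matrix (Fin n) (Fin n) ℝ => exp M) := exp_continuous
  unfold Function.uncurry
  fun_prop

lemma matrix_exp_aux_cont2 (n : ℕ) (A B : Matrix (Fin n) (Fin n) ℝ) (t : ℝ) :
    Continuous (fun s : ℝ =>
      t • (exp (s • (A + t • B)) * B * exp ((1 - s) • A))) := by
  have he : Continuous (fun M : Matrix (Fin n) (Fin n) ℝ => exp M) := exp_continuous
  fun_prop

lemma matrix_exp_aux_slope (n : ℕ) (A B : Matrix (Fin n) (Fin n) ℝ) (t s : ℝ) :
    Tendsto (slope (fun u : ℝ => exp (u • (A + t • B)) * exp ((1 - u) • A)) s)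
      (nhdsWithin s {s}ᶜ)
      (nhds (t • (exp (s • (A + t • B)) * B * exp ((1 - s) • A)))) := by
  set M := A + t • B
  have h1 : HasDerivAt (fun u : ℝ => exp (u • M)) (exp (s • M) * M) s :=
    hasDerivAt_exp_smul_const M s
  have h2 : HasDerivAt (fun u : ℝ => exp ((1 - u) • A))
      ((-1 : ℝ) • (A * exp ((1 - s) • A))) s := by
    have hout : HasDerivAt (fun u : ℝ => exp (u • A)) (A * exp ((1 - s) • A)) (1 - s) :=
      hasDerivAt_exp_smul_const' A (1 - s)
    have hin : HasDerivAt (fun u : ℝ => 1 - u) (-1 : ℝ) s := by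
      simpa using (hasDerivAt_id s).const_sub 1
    exact hout.scomp s hin
  have h3 := h1.mul h2
  have heq : exp (s • M) * M * exp ((1 - s) • A)
      + exp (s • M) * ((-1 : ℝ) • (A * exp ((1 - s) • A)))
      = t • (exp (s • M) * B * exp ((1 - s) • A)) := by
    have hM : M - A = t • B := by simp [M]
    calc exp (s • M) * M * exp ((1 - s) • A)
        + exp (s • M) * ((-1 : ℝ) • (A * exp ((1 - s) • A)))
        = exp (s • M) * (M - A) * exp ((1 - s) • A) := by
          simp [mul_sub, sub_mul, mul_assoc]; ring_nf
          abel
      _ = t • (exp (s • M) * B * exp ((1 - s) • A)) := by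
          rw [hM]; simp [mul_smul_comm, smul_mul_assoc]
  rw [heq] at h3
  exact hasDerivAt_iff_tendsto_slope.mp h3

end LinftyAux


attribute [local instance] Matrix.normedAddCommGroup Matrix.normedSpace

open NormedSpace intervalIntegral

/-- Derivative of the matrix exponential, integral form: for `n×n` real matrices `A, B`,
`t ↦ exp (A + t • B)` is differentiable at `t = 0` with derivative
`∫₀¹ exp (s • A) * B * exp ((1 - s) • A) ds`. -/
theorem matrix_exp_hasDerivAt_integral
    (n : ℕ) (A B : Matrix (Fin n) (Fin n) ℝ) :
    HasDerivAt (fun t : ℝ => NormedSpace.exp (A + t • B))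
      (∫ s in (0:ℝ)..1, NormedSpace.exp (s • A) * B * NormedSpace.exp ((1 - s) • A))
      0 := by
  have hcu : Continuous (Function.uncurry fun t s : ℝ =>
      exp (s • (A + t • B)) * B * exp ((1 - s) • A)) := matrix_exp_aux_cont n A B
  have key : ∀ t : ℝ, exp (A + t • B) - exp A
      = t • ∫ s in (0:ℝ)..1, exp (s • (A + t • B)) * B * exp ((1 - s) • A) := by
    intro t
    have hG : ∀ s ∈ Set.uIcc (0:ℝ) 1,
        HasDerivAt (fun u : ℝ => exp (u • (A + t • B)) * exp ((1 - u) • A))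
          (t • (exp (s • (A + t • B)) * B * exp ((1 - s) • A))) s := by
      intro s _
      have hs : Tendsto
          (slope (fun u : ℝ => exp (u • (A + t • B)) * exp ((1 - u) • A)) s)
          (nhdsWithin s {s}ᶜ)
          (nhds (t • (exp (s • (A + t • B)) * B * exp ((1 - s) • A)))) :=
        matrix_exp_aux_slope n A B t s
      exact hasDerivAt_iff_tendsto_slope.mpr hs
    have hc : Continuous (fun s : ℝ =>
        t • (exp (s • (A + t • B)) * B * exp ((1 - s) • A))) :=
      matrix_exp_aux_cont2 n A B t
    have hFTC := intervalIntegral.integral_eq_sub_of_hasDerivAt hG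
      (hc.intervalIntegrable 0 1)
    rw [intervalIntegral.integral_smul] at hFTC
    simp only [one_smul, sub_self, sub_zero, zero_smul, exp_zero, one_mul, mul_one] at hFTC
    exact hFTC.symm
  have hφcont : Continuous (fun t : ℝ =>
      ∫ s in (0:ℝ)..1, exp (s • (A + t • B)) * B * exp ((1 - s) • A)) :=
    intervalIntegral.continuous_parametric_intervalIntegral_of_continuous'
      (f := fun t s : ℝ => exp (s • (A + t • B)) * B * exp ((1 - s) • A)) hcu 0 1
  have hlim : Tendsto (fun t : ℝ =>
        ∫ s in (0:ℝ)..1, exp (s • (A + t • B)) * B * exp ((1 - s) • A))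
      (nhdsWithin 0 {(0:ℝ)}ᶜ)
      (nhds (∫ s in (0:ℝ)..1, exp (s • A) * B * exp ((1 - s) • A))) := by
    have h0 : (∫ s in (0:ℝ)..1, exp (s • (A + (0:ℝ) • B)) * B * exp ((1 - s) • A))
        = ∫ s in (0:ℝ)..1, exp (s • A) * B * exp ((1 - s) • A) := by
      simp
    have h1 := (hφcont.tendsto 0).mono_left
      (nhdsWithin_le_nhds (s := {(0:ℝ)}ᶜ))
    rwa [h0] at h1
  refine hasDerivAt_iff_tendsto_slope.mpr ?_
  refine hlim.congr' ?_
  filter_upwards [self_mem_nhdsWithin] with t ht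
  have ht' : t ≠ 0 := ht
  rw [slope_def_module]
  simp only [zero_smul, add_zero, sub_zero]
  rw [key t, smul_smul, inv_mul_cancel₀ ht', one_smul]
end

section
/- Derivative of the matrix exponential (left-Jacobian series form): for n×n real matrices A and B, define ad_A(B) = A·B − B·A and its iterates ad_A^m (with ad_A^0(B) = B). Then the series ∑_{m=0}^{∞} (1/(m+1)!) · ad_A^m(B) converges in the space of n×n real matrices, and the function t ↦ exp(A + t·B) is differentiable at t = 0 with derivative ( ∑_{m=0}^{∞} (1/(m+1)!) · ad_A^m(B) ) · exp(A). -/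
attribute [local instance] Matrix.normedAddCommGroup Matrix.normedSpace

open NormedSpace

/-- The adjoint action `ad_A(B) = A*B − B*A` on `n×n` real matrices. -/
def matAd {n : ℕ} (A : Matrix (Fin n) (Fin n) ℝ) (B : Matrix (Fin n) (Fin n) ℝ) :
    Matrix (Fin n) (Fin n) ℝ :=
  A * B - B * A

namespace MatJacAux

variable {n : ℕ}

local notation "MM" => Matrix (Fin n) (Fin n) ℝ

lemma norm_matmul_le (X Y : MM) : ‖X * Y‖ ≤ n * ‖X‖ * ‖Y‖ := by
  have h0 : (0:ℝ) ≤ n * ‖X‖ * ‖Y‖ := by positivity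
  rw [Matrix.norm_le_iff h0]
  intro i k
  rw [Matrix.mul_apply]
  calc ‖∑ j, X i j * Y j k‖ ≤ ∑ j, ‖X i j * Y j k‖ := norm_sum_le _ _
    _ ≤ ∑ _j : Fin n, ‖X‖ * ‖Y‖ := by
        refine Finset.sum_le_sum fun j _ => ?_
        rw [norm_mul]
        exact mul_le_mul (Matrix.norm_entry_le_entrywise_sup_norm X)
          (Matrix.norm_entry_le_entrywise_sup_norm Y) (norm_nonneg _) (norm_nonneg _)
    _ = n * ‖X‖ * ‖Y‖ := by simp [mul_assoc]

noncomputable def mulCLM : MM →L[ℝ] MM →L[ℝ] MM :=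
  LinearMap.mkContinuous₂ (LinearMap.mul ℝ MM) n norm_matmul_le

@[simp] lemma mulCLM_apply (X Y : MM) : (mulCLM X) Y = X * Y := rfl

lemma hasDerivAt_matmul {f g : ℝ → MM} {f' g' : MM} {t : ℝ}
    (hf : HasDerivAt f f' t) (hg : HasDerivAt g g' t) :
    HasDerivAt (fun s => f s * g s) (f' * g t + f t * g') t := by
  letI : NormedRing MM := Matrix.linftyOpNormedRing
  letI : NormedAlgebra ℝ MM := Matrix.linftyOpNormedAlgebra
  exact HasDerivAt.fun_mul (𝔸 := MM) hf hg

lemma hasDerivAt_affine (A B : MM) (t : ℝ) : HasDerivAt (fun s : ℝ => A + s • B) B t := by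
  have := ((hasDerivAt_id' t).smul_const B).const_add A
  rw [one_smul] at this
  exact this

lemma hasDerivAt_affpow (A B : MM) (k : ℕ) (t : ℝ) :
    HasDerivAt (fun s : ℝ => (A + s • B) ^ k)
      (∑ i ∈ Finset.range k, (A + t • B) ^ i * B * (A + t • B) ^ (k - 1 - i)) t := by
  induction k with
  | zero =>
    simp only [pow_zero, Finset.range_zero, Finset.sum_empty]
    exact hasDerivAt_const t (1 : MM)
  | succ k ih =>
      have h := hasDerivAt_matmul ih (hasDerivAt_affine A B t)
      have heq : (∑ i ∈ Finset.range k, (A + t • B) ^ i * B * (A + t • B) ^ (k - 1 - i))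
            * (A + t • B) + (A + t • B) ^ k * B
          = ∑ i ∈ Finset.range (k+1), (A + t • B) ^ i * B * (A + t • B) ^ (k - i) := by
        rw [Finset.sum_range_succ]
        congr 1
        · rw [Finset.sum_mul]
          refine Finset.sum_congr rfl fun i hi => ?_
          have hik : i < k := Finset.mem_range.mp hi
          have : k - i = (k - 1 - i) + 1 := by omega
          rw [this, pow_succ, ← mul_assoc]
        · rw [Nat.sub_self, pow_zero, mul_one]
      simp only [pow_succ, Nat.add_sub_cancel]
      rw [← heq]
      exact h

lemma norm_pow_le (X : MM) {c : ℝ} (hX : ‖X‖ ≤ c) (hc : 0 ≤ c) (i : ℕ) :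
    ‖X ^ i‖ ≤ (n * c) ^ i := by
  induction i with
  | zero =>
      rw [pow_zero, pow_zero]
      rw [Matrix.norm_le_iff zero_le_one]
      intro i j
      simp only [Matrix.one_apply]
      split <;> simp
  | succ i ih =>
      rw [pow_succ, pow_succ]
      calc ‖X ^ i * X‖ ≤ n * ‖X ^ i‖ * ‖X‖ := norm_matmul_le _ _
        _ ≤ n * (n * c) ^ i * c := by
            have hn : (0:ℝ) ≤ n := by positivity
            have := mul_le_mul (mul_le_mul_of_nonneg_left ih hn) hX (norm_nonneg _)
              (by positivity)
            simpa using this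
        _ = (n * c) ^ i * (n * c) := by ring

lemma norm_ad_iter_le (A B : MM) (m : ℕ) :
    ‖(matAd A)^[m] B‖ ≤ (2 * n * ‖A‖) ^ m * ‖B‖ := by
  induction m with
  | zero => simp
  | succ m ih =>
      rw [Function.iterate_succ_apply']
      set X := (matAd A)^[m] B with hXdef
      calc ‖matAd A X‖ ≤ ‖A * X‖ + ‖X * A‖ := norm_sub_le _ _
        _ ≤ n * ‖A‖ * ‖X‖ + n * ‖X‖ * ‖A‖ := add_le_add (norm_matmul_le _ _) (norm_matmul_le _ _)
        _ = (2 * n * ‖A‖) * ‖X‖ := by ring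
        _ ≤ (2 * n * ‖A‖) * ((2 * n * ‖A‖) ^ m * ‖B‖) := by
            have h0 : (0:ℝ) ≤ 2 * n * ‖A‖ := by positivity
            exact mul_le_mul_of_nonneg_left ih h0
        _ = (2 * n * ‖A‖) ^ (m+1) * ‖B‖ := by ring

lemma pow_mul_eq (A B : MM) (p : ℕ) :
    A ^ p * B
      = ∑ m ∈ Finset.range (p+1), (p.choose m : ℝ) • ((matAd A)^[m] B * A ^ (p - m)) := by
  classical
  set la := LinearMap.mulLeft ℝ A with hla
  set ra := LinearMap.mulRight ℝ A with hra
  have hlr : Commute la ra := by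
    apply LinearMap.ext
    intro X
    simp [hla, hra, Module.End.mul_apply, mul_assoc]
  have hcomm : Commute (la - ra) ra := (hlr).sub_left (Commute.refl ra)
  have hdiff : ⇑(la - ra) = matAd A := by
    funext X
    simp [hla, hra, matAd]
  have key := hcomm.add_pow p
  rw [sub_add_cancel] at key
  have happ := LinearMap.congr_fun key B
  have hlhs : (la ^ p) B = A ^ p * B := by
    rw [LinearMap.pow_mulLeft, LinearMap.mulLeft_apply]
  rw [hlhs] at happ
  rw [happ, LinearMap.sum_apply]
  refine Finset.sum_congr rfl fun m hm => ?_
  have hswap : (la - ra) ^ m * ra ^ (p - m) = ra ^ (p - m) * (la - ra) ^ m :=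
    (hcomm.pow_pow m (p - m)).eq
  simp only [hswap, Module.End.mul_apply, Module.End.natCast_apply, map_nsmul,
    LinearMap.pow_mulRight, LinearMap.mulRight_apply, Module.End.pow_apply, hdiff,
    Nat.cast_smul_eq_nsmul]
  congr 1
  rw [← Module.End.pow_apply, LinearMap.pow_mulRight, LinearMap.mulRight_apply]

lemma star_identity (A B : MM) : ∀ k : ℕ,
    ∑ i ∈ Finset.range (k+1), A ^ i * B * A ^ (k - i)
      = ∑ m ∈ Finset.range (k+1), (((k+1).choose (m+1) : ℝ)) • ((matAd A)^[m] B * A ^ (k - m))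
  | 0 => by simp
  | (k+1) => by
    have ih := star_identity A B k
    have hlhs : ∑ i ∈ Finset.range (k+2), A ^ i * B * A ^ (k+1-i)
        = (∑ i ∈ Finset.range (k+1), A ^ i * B * A ^ (k - i)) * A + A ^ (k+1) * B := by
      rw [Finset.sum_range_succ, Nat.sub_self, pow_zero, mul_one, Finset.sum_mul]
      congr 1
      refine Finset.sum_congr rfl fun i hi => ?_
      have hik : i < k + 1 := Finset.mem_range.mp hi
      have : k + 1 - i = (k - i) + 1 := by omega
      rw [this, pow_succ, ← mul_assoc]
    rw [hlhs, ih, pow_mul_eq A B (k+1), Finset.sum_mul]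
    have h1 : ∀ m ∈ Finset.range (k+1),
        ((k+1).choose (m+1) : ℝ) • ((matAd A)^[m] B * A ^ (k - m)) * A
          = ((k+1).choose (m+1) : ℝ) • ((matAd A)^[m] B * A ^ (k + 1 - m)) := by
      intro m hm
      have hmk : m < k + 1 := Finset.mem_range.mp hm
      have : k + 1 - m = (k - m) + 1 := by omega
      rw [smul_mul_assoc, mul_assoc, ← pow_succ, ← this]
    rw [Finset.sum_congr rfl h1]
    have h2 : ∑ m ∈ Finset.range (k+2), ((k+1).choose (m+1) : ℝ) • ((matAd A)^[m] B * A ^ (k + 1 - m))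
        = ∑ m ∈ Finset.range (k+1), ((k+1).choose (m+1) : ℝ) • ((matAd A)^[m] B * A ^ (k + 1 - m)) := by
      rw [Finset.sum_range_succ]
      simp [Nat.choose_succ_self]
    rw [← h2, ← Finset.sum_add_distrib]
    refine Finset.sum_congr rfl fun m hm => ?_
    have hpascal : ((k+2).choose (m+1) : ℝ) = ((k+1).choose m : ℝ) + ((k+1).choose (m+1) : ℝ) := by
      rw [← Nat.cast_add, ← Nat.choose_succ_succ]
    rw [hpascal, add_smul]
    exact add_comm _ _
  termination_by k => k

lemma summable_norm_exp_like (X : MM) {d : ℝ} (hX : ‖X‖ ≤ d) (hd : 0 ≤ d) :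
    Summable (fun k : ℕ => ‖(k.factorial : ℝ)⁻¹ • X ^ k‖) := by
  refine Summable.of_nonneg_of_le (fun k => norm_nonneg _) (fun k => ?_)
    (Real.summable_pow_div_factorial (n * d))
  rw [norm_smul, Real.norm_eq_abs, abs_of_nonneg (by positivity), div_eq_inv_mul]
  exact mul_le_mul_of_nonneg_left (norm_pow_le X hX hd k) (by positivity)

lemma summable_exp_like (X : MM) {d : ℝ} (hX : ‖X‖ ≤ d) (hd : 0 ≤ d) :
    Summable (fun k : ℕ => (k.factorial : ℝ)⁻¹ • X ^ k) :=
  (summable_norm_exp_like X hX hd).of_norm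

lemma summable_norm_ad (A B : MM) :
    Summable (fun m : ℕ => ‖(((m+1).factorial : ℝ))⁻¹ • (matAd A)^[m] B‖) := by
  refine Summable.of_nonneg_of_le (fun m => norm_nonneg _) (fun m => ?_)
    ((Real.summable_pow_div_factorial (2 * n * ‖A‖)).mul_right ‖B‖)
  rw [norm_smul, Real.norm_eq_abs, abs_of_nonneg (by positivity)]
  have h1 : ‖(matAd A)^[m] B‖ ≤ (2 * n * ‖A‖) ^ m * ‖B‖ := norm_ad_iter_le A B m
  have h2 : (((m+1).factorial : ℕ) : ℝ)⁻¹ ≤ ((m.factorial : ℕ) : ℝ)⁻¹ := by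
    apply inv_anti₀ (by positivity)
    exact_mod_cast Nat.factorial_le (Nat.le_succ m)
  calc (((m+1).factorial : ℕ) : ℝ)⁻¹ * ‖(matAd A)^[m] B‖
      ≤ ((m.factorial : ℕ) : ℝ)⁻¹ * ((2 * n * ‖A‖) ^ m * ‖B‖) :=
        mul_le_mul h2 h1 (norm_nonneg _) (by positivity)
    _ = (2 * n * ‖A‖) ^ m / (m.factorial : ℝ) * ‖B‖ := by ring

lemma summable_ad (A B : MM) :
    Summable (fun m : ℕ => (((m+1).factorial : ℝ))⁻¹ • (matAd A)^[m] B) :=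
  (summable_norm_ad A B).of_norm

end MatJacAux

open MatJacAux Finset in
/-- Derivative of the matrix exponential, left-Jacobian series form: the series
`∑ₘ ad_A^m(B) / (m+1)!` converges, and `t ↦ exp (A + t • B)` is differentiable at `t = 0`
with derivative `(∑ₘ ad_A^m(B) / (m+1)!) * exp A`. -/
theorem matrix_exp_hasDerivAt_leftJacobian
    (n : ℕ) (A B : Matrix (Fin n) (Fin n) ℝ) :
    Summable (fun m : ℕ => (((m + 1).factorial : ℝ))⁻¹ • (matAd A)^[m] B) ∧
    HasDerivAt (fun t : ℝ => NormedSpace.exp (A + t • B))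
      ((∑' m : ℕ, (((m + 1).factorial : ℝ))⁻¹ • (matAd A)^[m] B) * NormedSpace.exp A)
      0 := by
  classical
  refine ⟨summable_ad A B, ?_⟩
  set c : ℝ := ‖A‖ + ‖B‖ with hc
  have hc0 : (0:ℝ) ≤ c := by positivity
  have hAc : ‖A‖ ≤ c := le_add_of_nonneg_right (norm_nonneg _)
  set u : ℕ → ℝ := fun k => (n:ℝ)^2 * ‖B‖ * (((n:ℝ) * c) ^ (k-1) / ((k-1).factorial : ℝ)) with hu
  have husum : Summable u := by
    have h2 : Summable (fun k : ℕ => ((n:ℝ) * c) ^ (k-1) / (((k-1).factorial : ℕ) : ℝ)) := by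
      apply (summable_nat_add_iff 1).mp
      simpa using Real.summable_pow_div_factorial ((n:ℝ) * c)
    simp only [hu]
    exact h2.mul_left _
  set g : ℕ → ℝ → Matrix (Fin n) (Fin n) ℝ :=
    fun k s => (k.factorial : ℝ)⁻¹ • (A + s • B) ^ k with hgdef
  set g' : ℕ → ℝ → Matrix (Fin n) (Fin n) ℝ :=
    fun k s => (k.factorial : ℝ)⁻¹ •
      ∑ i ∈ range k, (A + s • B) ^ i * B * (A + s • B) ^ (k - 1 - i) with hg'def
  have hderiv : ∀ (k : ℕ) (s : ℝ), s ∈ Metric.ball (0:ℝ) 1 → HasDerivAt (g k) (g' k s) s :=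
    fun k s _ => by have := (hasDerivAt_affpow A B k s).const_smul ((k.factorial : ℝ)⁻¹); exact this
  have hbound : ∀ (k : ℕ) (s : ℝ), s ∈ Metric.ball (0:ℝ) 1 → ‖g' k s‖ ≤ u k := by
    intro k s hs
    have hXle : ‖A + s • B‖ ≤ c := by
      have habs : |s| ≤ 1 := by
        have := Metric.mem_ball.mp hs
        rw [Real.dist_eq, sub_zero] at this
        exact this.le
      calc ‖A + s • B‖ ≤ ‖A‖ + ‖s • B‖ := norm_add_le _ _
        _ = ‖A‖ + |s| * ‖B‖ := by rw [norm_smul, Real.norm_eq_abs]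
        _ ≤ ‖A‖ + 1 * ‖B‖ := by
            have := mul_le_mul_of_nonneg_right habs (norm_nonneg B)
            linarith
        _ = c := by rw [one_mul]
    cases k with
    | zero =>
        have hz0 : g' 0 s = 0 := by simp [hg'def]
        rw [hz0, norm_zero]
        simp only [hu]
        positivity
    | succ k =>
        have hterm : ∀ i ∈ range (k+1),
            ‖(A + s • B) ^ i * B * (A + s • B) ^ (k + 1 - 1 - i)‖
              ≤ (n:ℝ)^2 * ‖B‖ * ((n:ℝ) * c) ^ k := by
          intro i hi
          have hik : i < k + 1 := mem_range.mp hi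
          have e1 : ‖(A + s • B) ^ i‖ ≤ ((n:ℝ) * c) ^ i := norm_pow_le _ hXle hc0 i
          have e2 : ‖(A + s • B) ^ (k + 1 - 1 - i)‖ ≤ ((n:ℝ) * c) ^ (k - i) := by
            have hkk : k + 1 - 1 - i = k - i := by omega
            rw [hkk]
            exact norm_pow_le _ hXle hc0 _
          have e3 : ‖(A + s • B) ^ i * B‖ ≤ (n:ℝ) * ((n:ℝ) * c) ^ i * ‖B‖ := by
            refine (norm_matmul_le _ _).trans ?_
            gcongr
          calc ‖(A + s • B) ^ i * B * (A + s • B) ^ (k + 1 - 1 - i)‖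
              ≤ (n:ℝ) * ‖(A + s • B) ^ i * B‖ * ‖(A + s • B) ^ (k + 1 - 1 - i)‖ :=
                norm_matmul_le _ _
            _ ≤ (n:ℝ) * ((n:ℝ) * ((n:ℝ) * c) ^ i * ‖B‖) * (((n:ℝ) * c) ^ (k - i)) := by
                gcongr
            _ = (n:ℝ)^2 * ‖B‖ * (((n:ℝ) * c) ^ i * ((n:ℝ) * c) ^ (k - i)) := by ring
            _ = (n:ℝ)^2 * ‖B‖ * ((n:ℝ) * c) ^ k := by
                rw [← pow_add]
                congr 2
                omega
        have hsum : ‖∑ i ∈ range (k+1), (A + s • B) ^ i * B * (A + s • B) ^ (k + 1 - 1 - i)‖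
            ≤ ((k:ℝ)+1) * ((n:ℝ)^2 * ‖B‖ * ((n:ℝ) * c) ^ k) := by
          refine (norm_sum_le _ _).trans ?_
          refine (Finset.sum_le_sum hterm).trans ?_
          rw [Finset.sum_const, Finset.card_range, nsmul_eq_mul]
          push_cast
          exact le_rfl
        calc ‖g' (k+1) s‖
            = (((k+1).factorial : ℕ) : ℝ)⁻¹
                * ‖∑ i ∈ range (k+1), (A + s • B) ^ i * B * (A + s • B) ^ (k + 1 - 1 - i)‖ := by
              simp only [hg'def]
              rw [norm_smul, Real.norm_eq_abs, abs_of_nonneg (by positivity)]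
          _ ≤ (((k+1).factorial : ℕ) : ℝ)⁻¹
                * (((k:ℝ)+1) * ((n:ℝ)^2 * ‖B‖ * ((n:ℝ) * c) ^ k)) :=
              mul_le_mul_of_nonneg_left hsum (by positivity)
          _ = u (k+1) := by
              simp only [hu, Nat.add_sub_cancel]
              have h1 : (((k+1).factorial : ℕ) : ℝ) = ((k:ℝ)+1) * ((k.factorial : ℕ) : ℝ) := by
                rw [Nat.factorial_succ]
                push_cast
                ring
              rw [h1]
              have h2 : ((k:ℝ)+1) ≠ 0 := by positivity
              have h3 : ((k.factorial : ℕ) : ℝ) ≠ 0 := by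
                exact_mod_cast (Nat.factorial_pos k).ne'
              field_simp
  have h0mem : (0:ℝ) ∈ Metric.ball (0:ℝ) 1 := Metric.mem_ball_self one_pos
  have hg0 : Summable (fun k => g k 0) := by
    have := summable_exp_like (n := n) A hAc hc0
    simpa [hgdef] using this
  have hmain := hasDerivAt_tsum_of_isPreconnected husum Metric.isOpen_ball
    (convex_ball (0:ℝ) 1).isPreconnected hderiv hbound h0mem hg0 h0mem
  have hfun : (fun z : ℝ => ∑' k, g k z) = (fun t : ℝ => NormedSpace.exp (A + t • B)) := by
    funext z
    simp only [NormedSpace.exp_eq_tsum ℝ, hgdef]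
  replace hmain := (congrArg (fun F => HasDerivAt F (∑' k, g' k 0) 0) hfun).mp hmain
  have hS : Summable (fun k => g' k 0) :=
    Summable.of_norm_bounded husum (fun k => hbound k 0 h0mem)
  have hz : g' 0 0 = 0 := by simp [hg'def]
  have hL : ∀ k : ℕ, g' (k+1) 0
      = ∑ m ∈ range (k+1), ((((m+1).factorial : ℕ) : ℝ)⁻¹ * (((k-m).factorial : ℕ) : ℝ)⁻¹)
          • ((matAd A)^[m] B * A ^ (k - m)) := by
    intro k
    have h1 : g' (k+1) 0
        = (((k+1).factorial : ℕ) : ℝ)⁻¹ • ∑ i ∈ range (k+1), A ^ i * B * A ^ (k - i) := by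
      simp only [hg'def, zero_smul, add_zero, Nat.add_sub_cancel]
    rw [h1, star_identity A B k, Finset.smul_sum]
    refine Finset.sum_congr rfl fun m hm => ?_
    rw [smul_smul]
    congr 1
    have hm' : m < k + 1 := mem_range.mp hm
    have hfact : (((k+1).factorial : ℕ) : ℝ)
        = (((k+1).choose (m+1) : ℕ) : ℝ) * (((m+1).factorial : ℕ) : ℝ)
            * (((k-m).factorial : ℕ) : ℝ) := by
      have h := Nat.choose_mul_factorial_mul_factorial
        (Nat.succ_le_succ (Nat.le_of_lt_succ hm'))
      have h2 : k + 1 - (m+1) = k - m := by omega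
      rw [h2] at h
      exact_mod_cast h.symm
    rw [hfact]
    have e1 : (((m+1).factorial : ℕ) : ℝ) ≠ 0 := by exact_mod_cast (Nat.factorial_pos _).ne'
    have e2 : (((k-m).factorial : ℕ) : ℝ) ≠ 0 := by exact_mod_cast (Nat.factorial_pos _).ne'
    have e3 : (((k+1).choose (m+1) : ℕ) : ℝ) ≠ 0 := by
      have := Nat.choose_pos (show m+1 ≤ k+1 by omega)
      exact_mod_cast this.ne'
    field_simp
  have hprod : Summable (fun z : ℕ × ℕ =>
      ((((z.1+1).factorial : ℕ) : ℝ)⁻¹ • (matAd A)^[z.1] B) *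
      ((z.2.factorial : ℝ)⁻¹ • A ^ z.2)) := by
    apply Summable.of_norm_bounded
      (g := fun z : ℕ × ℕ => (n:ℝ) * (‖(((z.1+1).factorial : ℕ) : ℝ)⁻¹ • (matAd A)^[z.1] B‖ *
        ‖(z.2.factorial : ℝ)⁻¹ • A ^ z.2‖))
    · exact ((summable_norm_ad A B).mul_of_nonneg (summable_norm_exp_like A hAc hc0)
        (fun _ => norm_nonneg _) (fun _ => norm_nonneg _)).mul_left _
    · intro z
      refine (norm_matmul_le _ _).trans ?_
      rw [mul_assoc]
  have hval : (∑' k, g' k 0)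
      = (∑' m : ℕ, (((m + 1).factorial : ℝ))⁻¹ • (matAd A)^[m] B) * NormedSpace.exp A := by
    rw [hS.tsum_eq_zero_add, hz, zero_add]
    simp only [NormedSpace.exp_eq_tsum ℝ]
    rw [Summable.tsum_mul_tsum_eq_tsum_sum_antidiagonal (summable_ad A B)
      (summable_exp_like A hAc hc0) hprod]
    refine tsum_congr fun k => ?_
    rw [hL k, Finset.Nat.sum_antidiagonal_eq_sum_range_succ_mk]
    refine Finset.sum_congr rfl fun m hm => ?_
    rw [smul_mul_assoc, mul_smul_comm, smul_smul]
  rw [hval] at hmain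
  exact hmain
end

section
/- Signed distance of the 2-D cone, slanted-edge region: fix h > 0 and ψ ∈ (0, π/2), set p* = h/(1 + sin ψ), define l̄₁(x) = −(x − h)/tan ψ + h·tan ψ for x ≤ h, and define l̲₁(x) = −x/tan ψ for x ≤ 0, l̲₁(x) = 0 for 0 ≤ x ≤ p*, and l̲₁(x) = tan(π/4 + ψ/2)·x − h/cos ψ for p* ≤ x ≤ h. Let D₁ = {(x, y) ∈ ℝ² : x ≤ h and l̲₁(x) < y < l̄₁(x)}. Then for every q = (x, y) ∈ D₁, the distance from q to the frontier ∂F satisfies infDist(q, ∂F) = |−x + y/tan ψ| / √(1 + 1/tan²ψ); moreover −x + y/tan ψ ≤ 0 if and only if q ∈ F, so the signed distance of q to F equals (a₁·q)/‖a₁‖ with a₁ = (−1, 1/tan ψ). -/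
open scoped RealInnerProductSpace

/-- The signed distance function of a set `F`: `−infDist(q, ∂F)` inside `F` and
`+infDist(q, ∂F)` outside `F`. -/
noncomputable def coneSignedDist (F : Set (EuclideanSpace ℝ (Fin 2)))
    (q : EuclideanSpace ℝ (Fin 2)) : ℝ :=
  open scoped Classical in
  if q ∈ F then -Metric.infDist q (frontier F) else Metric.infDist q (frontier F)

private lemma euc_dist_two (q p : EuclideanSpace ℝ (Fin 2)) :
    dist q p = Real.sqrt ((q 0 - p 0)^2 + (q 1 - p 1)^2) := by
  rw [EuclideanSpace.dist_eq, Fin.sum_univ_two]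
  simp [Real.dist_eq, sq_abs]

private lemma tan_pi_div_four_add_half (ψ : ℝ) (h0 : 0 < ψ) (h2 : ψ < Real.pi/2) :
    Real.tan (Real.pi/4 + ψ/2) = (1 + Real.sin ψ)/Real.cos ψ := by
  have hpi := Real.pi_pos
  have hc2 : 0 < Real.cos (ψ/2) := Real.cos_pos_of_mem_Ioo ⟨by linarith, by linarith⟩
  have hs2 : 0 ≤ Real.sin (ψ/2) := Real.sin_nonneg_of_nonneg_of_le_pi (by linarith) (by linarith)
  have hlt : Real.sin (ψ/2) < Real.cos (ψ/2) := by
    rw [← Real.cos_pi_div_two_sub]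
    apply Real.cos_lt_cos_of_nonneg_of_le_pi (by linarith) (by linarith) (by linarith)
  have hsψ : Real.sin ψ = 2 * Real.sin (ψ/2) * Real.cos (ψ/2) := by
    rw [show ψ = 2*(ψ/2) by ring, Real.sin_two_mul]; ring_nf
  have hcψ : Real.cos ψ = Real.cos (ψ/2)^2 - Real.sin (ψ/2)^2 := by
    rw [show ψ = 2*(ψ/2) by ring, Real.cos_two_mul']; ring_nf
  have hpy : Real.sin (ψ/2)^2 + Real.cos (ψ/2)^2 = 1 := Real.sin_sq_add_cos_sq _
  have hcos : 0 < Real.cos ψ := Real.cos_pos_of_mem_Ioo ⟨by linarith, h2⟩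
  have hrt2 : 0 < Real.sqrt 2 := by positivity
  rw [Real.tan_eq_sin_div_cos, Real.sin_add, Real.cos_add, Real.sin_pi_div_four,
    Real.cos_pi_div_four]
  rw [div_eq_div_iff (by nlinarith) (ne_of_gt hcos)]
  rw [hsψ, hcψ]
  linear_combination (Real.sqrt 2/2*(Real.cos (ψ/2) - Real.sin (ψ/2))) * hpy

private lemma case_upper (s c x y p0 p1 : ℝ) (hpy : s^2 + c^2 = 1)
    (hcp : c*p1 = s*p0) : (y*c - x*s)^2 ≤ (x - p0)^2 + (y - p1)^2 := by
  have hS : y*c - x*s = -s*(x - p0) + c*(y - p1) := by linarith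
  have hid : (x - p0)^2 + (y - p1)^2
      = (-s*(x - p0) + c*(y - p1))^2 + (c*(x - p0) + s*(y - p1))^2 := by
    linear_combination (-((x - p0)^2 + (y - p1)^2)) * hpy
  rw [hS, hid]
  nlinarith [sq_nonneg (c*(x - p0) + s*(y - p1))]

private lemma case_lower_neg (s c x y p0 p1 : ℝ) (hpy : s^2 + c^2 = 1)
    (hx : x ≤ 0) (hy : 0 < y) (hp0 : 0 ≤ p0) (hp1 : p1 ≤ 0) :
    (y*c - x*s)^2 ≤ (x - p0)^2 + (y - p1)^2 := by
  nlinarith [sq_nonneg (y*s + x*c), mul_nonneg (neg_nonneg.2 hx) hp0,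
    mul_nonneg hy.le (neg_nonneg.2 hp1), sq_nonneg p0, sq_nonneg p1]

private lemma case_lower_pos (s c x y p0 p1 : ℝ) (hpy : s^2 + c^2 = 1)
    (hs : 0 < s) (hc : 0 < c) (hx : 0 < x) (hy : 0 < y) (hcp : c*p1 = -(s*p0)) :
    (y*c - x*s)^2 ≤ (x - p0)^2 + (y - p1)^2 := by
  have key : s*(x - p0) + c*(y - p1) = x*s + y*c := by linarith
  have hid : (x - p0)^2 + (y - p1)^2
      = (s*(x - p0) + c*(y - p1))^2 + (c*(x - p0) - s*(y - p1))^2 := by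
    linear_combination (-((x - p0)^2 + (y - p1)^2)) * hpy
  have h1 : (x*s + y*c)^2 ≤ (x - p0)^2 + (y - p1)^2 := by
    rw [hid, key]
    nlinarith [sq_nonneg (c*(x - p0) - s*(y - p1))]
  nlinarith [mul_pos hx hy, mul_pos hs hc]

private lemma case_vert_in (s c x y p1 h : ℝ) (hK3 : x*s - y*c ≤ h - x)
    (hS0 : y*c - x*s ≤ 0) (hxh : x ≤ h) :
    (y*c - x*s)^2 ≤ (x - h)^2 + (y - p1)^2 := by
  nlinarith [sq_nonneg (y - p1)]

private lemma case_vert_out (s c x y p1 h : ℝ) (hpy : s^2 + c^2 = 1)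
    (hS0 : 0 ≤ y*c - x*s) (hp1u : c*p1 ≤ s*h) :
    (y*c - x*s)^2 ≤ (x - h)^2 + (y - p1)^2 := by
  have hw : y*c - x*s ≤ -s*(x - h) + c*(y - p1) := by linarith
  nlinarith [sq_nonneg (c*(x - h) + s*(y - p1)), hw, hS0]

set_option maxHeartbeats 1000000 in
/-- Signed distance of the 2-D cone, slanted-edge region `D₁`: for
`q = (x, y) ∈ D₁ = {(x,y) : x ≤ h, l̲₁(x) < y < l̄₁(x)}`, the distance from `q` to the
frontier of `F` is `|−x + y/tan ψ| / √(1 + 1/tan²ψ)`; moreover `−x + y/tan ψ ≤ 0`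
iff `q ∈ F`, so the signed distance of `q` to `F` equals `(a₁·q)/‖a₁‖` with
`a₁ = (−1, 1/tan ψ)`. -/
theorem sdf_cone_slanted_edge_region
    (h ψ : ℝ) (hh : 0 < h) (hψ : ψ ∈ Set.Ioo 0 (Real.pi / 2))
    (F : Set (EuclideanSpace ℝ (Fin 2)))
    (hF : F = {q : EuclideanSpace ℝ (Fin 2) | |q 1| ≤ Real.tan ψ * q 0 ∧ q 0 ≤ h})
    (pstar : ℝ) (hpstar : pstar = h / (1 + Real.sin ψ))
    (lbar llow : ℝ → ℝ)
    (hlbar : ∀ x ≤ h, lbar x = -(x - h) / Real.tan ψ + h * Real.tan ψ)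
    (hlow₁ : ∀ x ≤ (0:ℝ), llow x = -x / Real.tan ψ)
    (hlow₂ : ∀ x, 0 ≤ x → x ≤ pstar → llow x = 0)
    (hlow₃ : ∀ x, pstar ≤ x → x ≤ h →
      llow x = Real.tan (Real.pi / 4 + ψ / 2) * x - h / Real.cos ψ)
    (D₁ : Set (EuclideanSpace ℝ (Fin 2)))
    (hD₁ : D₁ = {q : EuclideanSpace ℝ (Fin 2) |
      q 0 ≤ h ∧ llow (q 0) < q 1 ∧ q 1 < lbar (q 0)})
    (a₁ : EuclideanSpace ℝ (Fin 2))
    (ha₁ : a₁ = (WithLp.equiv 2 (Fin 2 → ℝ)).symm ![-1, 1 / Real.tan ψ]) :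
    ∀ q ∈ D₁,
      Metric.infDist q (frontier F) =
        |-(q 0) + q 1 / Real.tan ψ| / Real.sqrt (1 + 1 / Real.tan ψ ^ 2) ∧
      (-(q 0) + q 1 / Real.tan ψ ≤ 0 ↔ q ∈ F) ∧
      coneSignedDist F q = ⟪a₁, q⟫ / ‖a₁‖ := by
  obtain ⟨hψ0, hψ2⟩ := hψ
  have hpi := Real.pi_pos
  have hsin : 0 < Real.sin ψ := Real.sin_pos_of_pos_of_lt_pi hψ0 (by linarith)
  have hcos : 0 < Real.cos ψ := Real.cos_pos_of_mem_Ioo ⟨by linarith, hψ2⟩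
  have htan : Real.tan ψ = Real.sin ψ / Real.cos ψ := Real.tan_eq_sin_div_cos ψ
  have htanpos : 0 < Real.tan ψ := by rw [htan]; positivity
  have hpyth : Real.sin ψ ^ 2 + Real.cos ψ ^ 2 = 1 := Real.sin_sq_add_cos_sq ψ
  have htanhalf : Real.tan (Real.pi/4 + ψ/2) = (1 + Real.sin ψ)/Real.cos ψ :=
    tan_pi_div_four_add_half ψ hψ0 hψ2
  -- closedness & frontier characterization of F
  have hcont0 : Continuous (fun p : EuclideanSpace ℝ (Fin 2) => p 0) :=
    (EuclideanSpace.proj (0 : Fin 2) : EuclideanSpace ℝ (Fin 2) →L[ℝ] ℝ).continuous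
  have hcont1 : Continuous (fun p : EuclideanSpace ℝ (Fin 2) => p 1) :=
    (EuclideanSpace.proj (1 : Fin 2) : EuclideanSpace ℝ (Fin 2) →L[ℝ] ℝ).continuous
  have hFeq : F = ({p : EuclideanSpace ℝ (Fin 2) | p 1 ≤ Real.tan ψ * p 0} ∩
      {p : EuclideanSpace ℝ (Fin 2) | -(Real.tan ψ * p 0) ≤ p 1}) ∩
      {p : EuclideanSpace ℝ (Fin 2) | p 0 ≤ h} := by
    rw [hF]; ext p
    simp only [Set.mem_setOf_eq, Set.mem_inter_iff, abs_le]
    tauto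
  have hclosed : IsClosed F := by
    rw [hFeq]
    exact ((isClosed_le hcont1 (by fun_prop)).inter
      (isClosed_le (by fun_prop) hcont1)).inter (isClosed_le hcont0 continuous_const)
  have hfr_sub : frontier F ⊆ {p : EuclideanSpace ℝ (Fin 2) |
      p 1 = Real.tan ψ * p 0 ∨ -(Real.tan ψ * p 0) = p 1 ∨ p 0 = h} := by
    rw [hFeq]
    intro p hp
    rcases frontier_inter_subset _ _ hp with h1 | h2
    · rcases frontier_inter_subset _ _ h1.1 with h3 | h4
      · exact Or.inl (frontier_le_subset_eq hcont1 (by fun_prop) h3.1)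
      · exact Or.inr (Or.inl (frontier_le_subset_eq (by fun_prop) hcont1 h4.2))
    · exact Or.inr (Or.inr (frontier_le_subset_eq hcont0 continuous_const h2.2))
  intro q hq
  rw [hD₁] at hq
  obtain ⟨hx, hylow, hyup⟩ := hq
  set x : ℝ := q 0 with hxdef
  set y : ℝ := q 1 with hydef
  set S : ℝ := y * Real.cos ψ - x * Real.sin ψ with hSdef
  -- basic region facts
  have hyneg : x ≤ 0 → 0 < y := by
    intro hx0
    have := hylow
    rw [hlow₁ x hx0] at this
    have h1 : 0 ≤ -x / Real.tan ψ := div_nonneg (by linarith) htanpos.le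
    linarith
  have hypos : 0 ≤ x → 0 < y := by
    intro hx0
    rcases le_total x pstar with hxp | hxp
    · rw [hlow₂ x hx0 hxp] at hylow; exact hylow
    · have := hylow
      rw [hlow₃ x hxp hx, htanhalf] at this
      have e : (1 + Real.sin ψ)/Real.cos ψ * x - h/Real.cos ψ
          = ((1 + Real.sin ψ)*x - h)/Real.cos ψ := by ring
      rw [e] at this
      have hnum : 0 ≤ (1 + Real.sin ψ)*x - h := by
        have : h / (1 + Real.sin ψ) ≤ x := hpstar ▸ hxp
        rw [div_le_iff₀ (by linarith)] at this
        linarith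
      have : 0 ≤ ((1 + Real.sin ψ)*x - h)/Real.cos ψ := by positivity
      linarith
  have hSpos_of : x ≤ 0 → 0 < S := by
    intro hx0
    have hy0 := hyneg hx0
    have : x * Real.sin ψ ≤ 0 := mul_nonpos_of_nonpos_of_nonneg hx0 hsin.le
    nlinarith [mul_pos hy0 hcos]
  -- t > 0
  have hKT : 0 < x * Real.cos ψ + y * Real.sin ψ := by
    rcases le_or_gt x 0 with hx0 | hx0
    · have := hylow
      rw [hlow₁ x hx0, htan] at this
      have e : -x / (Real.sin ψ / Real.cos ψ) = -x * Real.cos ψ / Real.sin ψ := by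
        field_simp
      rw [e] at this
      have := (div_lt_iff₀ hsin).mp this
      linarith
    · have hy0 := hypos hx0.le
      nlinarith [mul_pos hx0 hcos, mul_pos hy0 hsin]
  -- t * cos ψ < h from upper bound
  have hK2 : (x * Real.cos ψ + y * Real.sin ψ) * Real.cos ψ < h := by
    have := hyup
    rw [hlbar x hx, htan] at this
    have e : -(x - h) / (Real.sin ψ / Real.cos ψ) + h * (Real.sin ψ / Real.cos ψ)
        = ((h - x)*Real.cos ψ^2 + h*Real.sin ψ^2) / (Real.sin ψ * Real.cos ψ) := by
      field_simp; ring
    rw [e] at this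
    have h2 := (lt_div_iff₀ (by positivity)).mp this
    nlinarith [hpyth]
  -- K3 : x sin − y cos ≤ h − x
  have hK3 : x * Real.sin ψ - y * Real.cos ψ ≤ h - x := by
    rcases le_or_gt x 0 with hx0 | hx0
    · have hS := hSpos_of hx0
      have : 0 < h - x := by linarith
      nlinarith
    · rcases le_total x pstar with hxp | hxp
      · have hy0 := hypos hx0.le
        have hxs : x * (1 + Real.sin ψ) ≤ h := by
          have : x ≤ h / (1 + Real.sin ψ) := hpstar ▸ hxp
          rw [le_div_iff₀ (by linarith)] at this
          linarith
        linarith [hxs, mul_pos hy0 hcos]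
      · have := hylow
        rw [hlow₃ x hxp hx, htanhalf] at this
        have e : (1 + Real.sin ψ)/Real.cos ψ * x - h/Real.cos ψ
            = ((1 + Real.sin ψ)*x - h)/Real.cos ψ := by ring
        rw [e] at this
        have := (div_lt_iff₀ hcos).mp this
        linarith
  -- the foot of the perpendicular on the upper edge
  set t : ℝ := x * Real.cos ψ + y * Real.sin ψ with htdef
  set pfoot : EuclideanSpace ℝ (Fin 2) :=
    (WithLp.equiv 2 (Fin 2 → ℝ)).symm ![t * Real.cos ψ, t * Real.sin ψ] with hpfdef
  have hpf0 : pfoot 0 = t * Real.cos ψ := by simp [hpfdef]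
  have hpf1 : pfoot 1 = t * Real.sin ψ := by simp [hpfdef]
  have htc : Real.tan ψ * (t * Real.cos ψ) = t * Real.sin ψ := by
    rw [htan]; field_simp
  have hpfF : pfoot ∈ F := by
    rw [hF]
    refine ⟨?_, ?_⟩
    · rw [hpf0, hpf1, htc, abs_of_nonneg (by positivity : (0:ℝ) ≤ t * Real.sin ψ)]
    · rw [hpf0]; exact hK2.le
  have hpfnotint : pfoot ∉ interior F := by
    intro hint
    rw [mem_interior_iff_mem_nhds, Metric.mem_nhds_iff] at hint
    obtain ⟨ε, hε, hball⟩ := hint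
    set pz : EuclideanSpace ℝ (Fin 2) :=
      (WithLp.equiv 2 (Fin 2 → ℝ)).symm ![t * Real.cos ψ, t * Real.sin ψ + ε/2] with hpzdef
    have hdist : dist pz pfoot = ε/2 := by
      rw [euc_dist_two]
      simp only [hpzdef, hpfdef, WithLp.equiv_symm_apply, PiLp.toLp_apply, Matrix.cons_val_zero,
        Matrix.cons_val_one, Matrix.head_cons]
      rw [show t*Real.cos ψ - t*Real.cos ψ = 0 by ring,
        show t*Real.sin ψ + ε/2 - t*Real.sin ψ = ε/2 by ring]
      rw [show (0:ℝ)^2 + (ε/2)^2 = (ε/2)^2 by ring]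
      exact Real.sqrt_sq (by linarith)
    have hz : pz ∈ F := hball (by rw [Metric.mem_ball, hdist]; linarith)
    rw [hF] at hz
    obtain ⟨h1, _⟩ := hz
    have h2 : pz 1 = t * Real.sin ψ + ε/2 := by simp [hpzdef]
    have h3 : pz 0 = t * Real.cos ψ := by simp [hpzdef]
    rw [h2, h3, htc] at h1
    have := le_abs_self (t * Real.sin ψ + ε/2)
    linarith
  have hpffr : pfoot ∈ frontier F := by
    rw [hclosed.frontier_eq]; exact ⟨hpfF, hpfnotint⟩
  -- dist q pfoot = |S|
  have hqf : dist q pfoot = |S| := by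
    have e1 : x - t * Real.cos ψ = -Real.sin ψ * S := by
      rw [htdef, hSdef]; linear_combination (-x) * hpyth
    have e2 : y - t * Real.sin ψ = Real.cos ψ * S := by
      rw [htdef, hSdef]; linear_combination (-y) * hpyth
    rw [euc_dist_two, hpf0, hpf1, ← hxdef, ← hydef, e1, e2, show (-Real.sin ψ * S)^2 + (Real.cos ψ * S)^2 = S^2 by
      linear_combination S^2 * hpyth]
    · exact Real.sqrt_sq_eq_abs S
  -- lower bound : every frontier point is at distance ≥ |S|
  have hlb : ∀ p ∈ frontier F, |S| ≤ dist q p := by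
    intro p hp
    have hpF : p ∈ F := hclosed.frontier_subset hp
    rw [hF] at hpF
    obtain ⟨habs, hph⟩ := hpF
    have hp0 : 0 ≤ p 0 := by
      have h0 : 0 ≤ Real.tan ψ * p 0 := (abs_nonneg _).trans habs
      exact nonneg_of_mul_nonneg_right h0 htanpos
    rw [euc_dist_two, ← Real.sqrt_sq_eq_abs S, ← hxdef, ← hydef]
    apply Real.sqrt_le_sqrt
    rw [hSdef]
    rcases hfr_sub hp with h1 | h2 | h3
    · -- upper edge line
      have hcp : Real.cos ψ * p 1 = Real.sin ψ * p 0 := by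
        rw [h1, htan]; field_simp
      exact case_upper _ _ x y _ _ hpyth hcp
    · -- lower edge line
      have hcp : Real.cos ψ * p 1 = -(Real.sin ψ * p 0) := by
        rw [← h2, htan]; field_simp
      rcases le_or_gt x 0 with hx0 | hx0
      · have hy0 := hyneg hx0
        have hp1 : p 1 ≤ 0 := by nlinarith [mul_nonneg hsin.le hp0]
        exact case_lower_neg _ _ x y _ _ hpyth hx0 hy0 hp0 hp1
      · exact case_lower_pos _ _ x y _ _ hpyth hsin hcos hx0 (hypos hx0.le) hcp
    · -- vertical edge
      rw [h3]
      rcases le_or_gt S 0 with hS0 | hS0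
      · exact case_vert_in _ _ x y _ h hK3 (hSdef ▸ hS0) hx
      · have hp1u : Real.cos ψ * p 1 ≤ Real.sin ψ * h := by
          have h6 := le_trans (le_abs_self (p 1)) habs
          rw [h3] at h6
          have h5 : Real.cos ψ * p 1 ≤ Real.cos ψ * (Real.tan ψ * h) := by nlinarith
          rw [htan] at h5
          have h7 : Real.cos ψ * (Real.sin ψ / Real.cos ψ * h) = Real.sin ψ * h := by
            field_simp
          linarith
        exact case_vert_out _ _ x y _ h hpyth (hSdef ▸ hS0.le) hp1u
  -- infDist = |S|
  have hub : Metric.infDist q (frontier F) ≤ |S| :=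
    hqf ▸ Metric.infDist_le_dist_of_mem hpffr
  have hlb' : |S| ≤ Metric.infDist q (frontier F) := by
    by_contra hcon
    push_neg at hcon
    obtain ⟨p, hpmem, hplt⟩ := (Metric.infDist_lt_iff ⟨pfoot, hpffr⟩).1 hcon
    exact absurd hplt (not_lt.2 (hlb p hpmem))
  have hID : Metric.infDist q (frontier F) = |S| := le_antisymm hub hlb'
  -- algebraic reformulations
  have hsqrt : Real.sqrt (1 + 1 / Real.tan ψ ^ 2) = 1 / Real.sin ψ := by
    rw [show 1 + 1 / Real.tan ψ ^ 2 = (1 / Real.sin ψ)^2 by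
      rw [htan]; field_simp; exact hpyth]
    exact Real.sqrt_sq (by positivity)
  have hlin : -x + y / Real.tan ψ = S / Real.sin ψ := by
    rw [htan, hSdef]; field_simp; ring
  have habs2 : |-x + y / Real.tan ψ| = |S| / Real.sin ψ := by
    rw [hlin, abs_div, abs_of_pos hsin]
  -- part 2 iff
  have hiff : -x + y / Real.tan ψ ≤ 0 ↔ q ∈ F := by
    rw [hF]
    simp only [Set.mem_setOf_eq, ← hxdef, ← hydef]
    constructor
    · intro hle
      have hSle : S ≤ 0 := by
        rw [hlin] at hle
        by_contra hc
        push_neg at hc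
        have : 0 < S / Real.sin ψ := by positivity
        linarith
      have hx0 : 0 < x := by
        by_contra hc
        push_neg at hc
        linarith [hSpos_of hc]
      have hy0 := hypos hx0.le
      refine ⟨?_, hx⟩
      rw [abs_of_pos hy0, htan]
      rw [div_mul_eq_mul_div, le_div_iff₀ hcos]
      nlinarith
    · rintro ⟨h1, -⟩
      have h2 : y ≤ Real.tan ψ * x := le_trans (le_abs_self y) h1
      rw [hlin]
      apply div_nonpos_of_nonpos_of_nonneg _ hsin.le
      rw [htan] at h2
      have h3 : y * Real.cos ψ ≤ Real.sin ψ / Real.cos ψ * x * Real.cos ψ := by nlinarith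
      have h4 : Real.sin ψ / Real.cos ψ * x * Real.cos ψ = x * Real.sin ψ := by
        field_simp
      rw [hSdef]; linarith
  refine ⟨?_, hiff, ?_⟩
  · rw [hID, habs2, hsqrt]
    field_simp
  · -- signed distance
    have hinner : ⟪a₁, q⟫ = -x + y / Real.tan ψ := by
      rw [ha₁]
      simp [PiLp.inner_apply, Fin.sum_univ_two, ← hxdef, ← hydef]
      rw [← Real.tan_inv_eq_cot]
      ring
    have hnorm : ‖a₁‖ = 1 / Real.sin ψ := by
      rw [ha₁, EuclideanSpace.norm_eq]
      simp only [WithLp.equiv_symm_apply, PiLp.toLp_apply, Fin.sum_univ_two, Matrix.cons_val_zero,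
        Matrix.cons_val_one, Matrix.head_cons]
      rw [show ‖(-1:ℝ)‖^2 + ‖1/Real.tan ψ‖^2 = 1 + 1/Real.tan ψ^2 by
        simp [norm_sub_rev, Real.norm_eq_abs, sq_abs]
        rw [← Real.tan_inv_eq_cot, inv_pow]]
      exact hsqrt
    have hval : ⟪a₁, q⟫ / ‖a₁‖ = S := by
      rw [hinner, hnorm, hlin]
      field_simp
    rw [hval, coneSignedDist]
    split_ifs with hqF
    · have hSle : S ≤ 0 := by
        have := hiff.2 hqF
        rw [hlin] at this
        by_contra hc
        push_neg at hc
        have : 0 < S / Real.sin ψ := by positivity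
        linarith
      rw [hID, abs_of_nonpos hSle]; ring
    · have hSpos : 0 < S := by
        by_contra hc
        push_neg at hc
        apply hqF
        apply hiff.1
        rw [hlin]
        exact div_nonpos_of_nonpos_of_nonneg hc hsin.le
      rw [hID, abs_of_pos hSpos]
end

section
/- Signed distance of the 2-D cone, base region: fix h > 0 and ψ ∈ (0, π/2), set p* = h/(1 + sin ψ), and define l̲₁(x) = tan(π/4 + ψ/2)·x − h/cos ψ for p* ≤ x ≤ h and l̲₁(x) = h·tan ψ for x ≥ h. Let D₃ = {(x, y) ∈ ℝ² : x ≥ p* and −l̲₁(x) < y < l̲₁(x)}. Then for every q = (x, y) ∈ D₃, the distance from q to the frontier ∂F satisfies infDist(q, ∂F) = |x − h|; moreover x − h ≤ 0 if and only if q ∈ F, so the signed distance of q to F equals (a₃·q + b₃)/‖a₃‖ with a₃ = (1, 0), b₃ = −h. -/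
open scoped RealInnerProductSpace

/-- The signed distance function of a set `F`: `−infDist(q, ∂F)` inside `F` and
`+infDist(q, ∂F)` outside `F`. -/
noncomputable def signedDistSet (F : Set (EuclideanSpace ℝ (Fin 2)))
    (q : EuclideanSpace ℝ (Fin 2)) : ℝ :=
  open scoped Classical in
  if q ∈ F then -Metric.infDist q (frontier F) else Metric.infDist q (frontier F)

lemma tan_pi4_add_half (ψ : ℝ) (h1 : 0 < ψ) (h2 : ψ < Real.pi / 2) :
    Real.tan (Real.pi / 4 + ψ / 2) = (1 + Real.sin ψ) / Real.cos ψ := by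
  have hpi := Real.pi_pos
  have hcos2 : 0 < Real.cos (Real.pi / 4 + ψ / 2) :=
    Real.cos_pos_of_mem_Ioo ⟨by linarith, by linarith⟩
  have hcψ : 0 < Real.cos ψ := Real.cos_pos_of_mem_Ioo ⟨by linarith, by linarith⟩
  have hsθ : 0 < Real.sin (ψ / 2) := Real.sin_pos_of_pos_of_lt_pi (by linarith) (by linarith)
  have hcθ : 0 < Real.cos (ψ / 2) := Real.cos_pos_of_mem_Ioo ⟨by linarith, by linarith⟩
  have hsin : Real.sin ψ = 2 * Real.sin (ψ / 2) * Real.cos (ψ / 2) := by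
    rw [← Real.sin_two_mul]; ring_nf
  have hcos : Real.cos ψ = Real.cos (ψ / 2) ^ 2 - Real.sin (ψ / 2) ^ 2 := by
    have := Real.cos_two_mul' (ψ / 2)
    rw [← this]; ring_nf
  have hpy := Real.sin_sq_add_cos_sq (ψ / 2)
  rw [Real.tan_eq_sin_div_cos, Real.sin_add, Real.cos_add, Real.sin_pi_div_four,
    Real.cos_pi_div_four]
  have hd : 0 < Real.sqrt 2 / 2 * Real.cos (ψ / 2) - Real.sqrt 2 / 2 * Real.sin (ψ / 2) := by
    have := hcos2
    rwa [Real.cos_add, Real.sin_pi_div_four, Real.cos_pi_div_four] at this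
  rw [div_eq_div_iff hd.ne' hcψ.ne']
  rw [hsin, hcos]
  linear_combination (Real.sqrt 2 / 2 * (Real.cos (ψ / 2) - Real.sin (ψ / 2))) * hpy

/-- Norm of points in `EuclideanSpace ℝ (Fin 2)` in coordinates. -/
lemma dist_eq_two (p q : EuclideanSpace ℝ (Fin 2)) :
    dist p q = Real.sqrt ((p 0 - q 0) ^ 2 + (p 1 - q 1) ^ 2) := by
  rw [EuclideanSpace.dist_eq, Fin.sum_univ_two]
  simp [Real.dist_eq, sq_abs]

set_option maxHeartbeats 2000000 in
/-- Signed distance of the 2-D cone, base region `D₃`: for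
`q = (x, y) ∈ D₃ = {(x,y) : x ≥ p*, −l̲₁(x) < y < l̲₁(x)}`, the distance from `q` to the
frontier of `F` is `|x − h|`; moreover `x − h ≤ 0` iff `q ∈ F`, so the signed distance
of `q` to `F` equals `(a₃·q + b₃)/‖a₃‖` with `a₃ = (1, 0)`, `b₃ = −h`. -/
theorem sdf_cone_base_region
    (h ψ : ℝ) (hh : 0 < h) (hψ : ψ ∈ Set.Ioo 0 (Real.pi / 2))
    (F : Set (EuclideanSpace ℝ (Fin 2)))
    (hF : F = {q : EuclideanSpace ℝ (Fin 2) | |q 1| ≤ Real.tan ψ * q 0 ∧ q 0 ≤ h})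
    (pstar : ℝ) (hpstar : pstar = h / (1 + Real.sin ψ))
    (llow : ℝ → ℝ)
    (hlow₁ : ∀ x, pstar ≤ x → x ≤ h →
      llow x = Real.tan (Real.pi / 4 + ψ / 2) * x - h / Real.cos ψ)
    (hlow₂ : ∀ x, h ≤ x → llow x = h * Real.tan ψ)
    (D₃ : Set (EuclideanSpace ℝ (Fin 2)))
    (hD₃ : D₃ = {q : EuclideanSpace ℝ (Fin 2) |
      pstar ≤ q 0 ∧ -llow (q 0) < q 1 ∧ q 1 < llow (q 0)})
    (a₃ : EuclideanSpace ℝ (Fin 2)) (b₃ : ℝ)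
    (ha₃ : a₃ = (WithLp.equiv 2 (Fin 2 → ℝ)).symm ![1, 0])
    (hb₃ : b₃ = -h) :
    ∀ q ∈ D₃,
      Metric.infDist q (frontier F) = |q 0 - h| ∧
      (q 0 - h ≤ 0 ↔ q ∈ F) ∧
      signedDistSet F q = (⟪a₃, q⟫ + b₃) / ‖a₃‖ := by
  obtain ⟨hψ0, hψπ⟩ := hψ
  set s := Real.sin ψ with hs
  set c := Real.cos ψ with hc
  have hs0 : 0 < s := Real.sin_pos_of_pos_of_lt_pi hψ0 (by linarith [Real.pi_pos])
  have hc0 : 0 < c := Real.cos_pos_of_mem_Ioo ⟨by linarith [Real.pi_pos], hψπ⟩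
  have hpy : s ^ 2 + c ^ 2 = 1 := Real.sin_sq_add_cos_sq ψ
  have htan : Real.tan ψ = s / c := Real.tan_eq_sin_div_cos ψ
  have hT : Real.tan (Real.pi / 4 + ψ / 2) = (1 + s) / c := tan_pi4_add_half ψ hψ0 hψπ
  clear_value s c
  -- continuity of coordinates
  have hcont0 : Continuous fun q : EuclideanSpace ℝ (Fin 2) => q 0 :=
    (EuclideanSpace.proj (0 : Fin 2)).continuous
  have hcont1 : Continuous fun q : EuclideanSpace ℝ (Fin 2) => q 1 :=
    (EuclideanSpace.proj (1 : Fin 2)).continuous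
  have hFc : IsClosed F := by
    rw [hF]
    exact (isClosed_le (continuous_abs.comp hcont1)
      (continuous_const.mul hcont0)).inter (isClosed_le hcont0 continuous_const)
  -- the open core
  have hUopen : IsOpen {q : EuclideanSpace ℝ (Fin 2) | |q 1| < Real.tan ψ * q 0 ∧ q 0 < h} :=
    (isOpen_lt (continuous_abs.comp hcont1) (continuous_const.mul hcont0)).inter
      (isOpen_lt hcont0 continuous_const)
  have hUint : {q : EuclideanSpace ℝ (Fin 2) | |q 1| < Real.tan ψ * q 0 ∧ q 0 < h}
      ⊆ interior F := by
    apply interior_maximal _ hUopen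
    rw [hF]; rintro q ⟨h1, h2⟩; exact ⟨h1.le, h2.le⟩
  -- description of frontier points
  have hfr : ∀ p ∈ frontier F,
      (|p 1| ≤ Real.tan ψ * p 0 ∧ p 0 ≤ h) ∧ (Real.tan ψ * p 0 ≤ |p 1| ∨ h ≤ p 0) := by
    intro p hp
    rw [hFc.frontier_eq] at hp
    obtain ⟨hpF, hpI⟩ := hp
    refine ⟨by rw [hF] at hpF; exact hpF, ?_⟩
    by_contra hcon
    push_neg at hcon
    exact hpI (hUint ⟨hcon.1, hcon.2⟩)
  -- a point of the frontier above q (same second coordinate, first coordinate h)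
  have hwmem : ∀ y : ℝ, |y| ≤ Real.tan ψ * h →
      ((WithLp.equiv 2 (Fin 2 → ℝ)).symm ![h, y]) ∈ frontier F := by
    intro y hy
    rw [hFc.frontier_eq]
    constructor
    · rw [hF]
      constructor <;> simp [WithLp.equiv_symm_apply, PiLp.toLp_apply, hy]
    · intro hint
      rw [mem_interior_iff_mem_nhds, Metric.mem_nhds_iff] at hint
      obtain ⟨ε, hε, hball⟩ := hint
      have hmem : ((WithLp.equiv 2 (Fin 2 → ℝ)).symm ![h + ε / 2, y]) ∈ F := by
        apply hball
        rw [Metric.mem_ball, dist_eq_two]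
        simp only [WithLp.equiv_symm_apply, PiLp.toLp_apply, Matrix.cons_val_zero, Matrix.cons_val_one,
          Matrix.head_cons]
        rw [show (h + ε / 2 - h) ^ 2 + (y - y) ^ 2 = (ε / 2) ^ 2 by ring,
          Real.sqrt_sq (by linarith)]
        linarith
      rw [hF] at hmem
      have := hmem.2
      simp only [WithLp.equiv_symm_apply, PiLp.toLp_apply, Matrix.cons_val_zero] at this
      linarith
  have hne : (frontier F).Nonempty :=
    ⟨_, hwmem 0 (by rw [abs_zero, htan]; positivity)⟩
  -- main body
  intro q hq
  rw [hD₃] at hq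
  obtain ⟨hx, hy1, hy2⟩ := hq
  set x := q 0 with hxdef
  set y := q 1 with hydef
  clear_value x y
  have hpst : 0 < pstar := by rw [hpstar]; positivity
  have hx0 : 0 < x := lt_of_lt_of_le hpst hx
  -- distance from q to any point vertically bounded
  have hqdist : ∀ p : EuclideanSpace ℝ (Fin 2), |x - p 0| ≤ dist q p := by
    intro p
    rw [dist_eq_two, ← hxdef, ← hydef, ← Real.sqrt_sq_eq_abs]
    exact Real.sqrt_le_sqrt (le_add_of_nonneg_right (sq_nonneg _))
  -- key division-free facts
  have hmul : ∀ z : ℝ, z < llow x → x ≤ h → c * z < (1 + s) * x - h := by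
    intro z hz hxh
    have hl := hlow₁ x hx hxh
    rw [hl, hT] at hz
    have h1 := mul_lt_mul_of_pos_right hz hc0
    have h2 : ((1 + s) / c * x - h / c) * c = (1 + s) * x - h := by field_simp
    rw [h2] at h1; linarith
  have hmul' : ∀ z : ℝ, z < llow x → h ≤ x → c * z < h * s := by
    intro z hz hxh
    have hl := hlow₂ x hxh
    rw [hl, htan] at hz
    have h1 := mul_lt_mul_of_pos_right hz hc0
    have h2 : h * (s / c) * c = h * s := by field_simp
    rw [h2] at h1; linarith
  -- |y| bound, division free: c * |y| < h * s
  have hyabsc : c * |y| < h * s := by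
    rcases le_total x h with hxh | hxh
    · have k1 := hmul y hy2 hxh
      have k2 := hmul (-y) (by linarith) hxh
      have k3 : (1 + s) * x ≤ (1 + s) * h :=
        mul_le_mul_of_nonneg_left hxh (by linarith)
      rcases abs_cases y with ⟨hy, _⟩ | ⟨hy, _⟩ <;> rw [hy] <;> nlinarith
    · have k1 := hmul' y hy2 hxh
      have k2 := hmul' (-y) (by linarith) hxh
      rcases abs_cases y with ⟨hy, _⟩ | ⟨hy, _⟩ <;> rw [hy] <;> nlinarith
  -- the point (h, y) lies on the frontier
  have hw : ((WithLp.equiv 2 (Fin 2 → ℝ)).symm ![h, y]) ∈ frontier F := by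
    apply hwmem
    rw [htan, div_mul_eq_mul_div, le_div_iff₀ hc0]
    nlinarith
  have hub : Metric.infDist q (frontier F) ≤ |x - h| := by
    have := Metric.infDist_le_dist_of_mem (x := q) hw
    rw [dist_eq_two, ← hxdef, ← hydef] at this
    simpa [WithLp.equiv_symm_apply, PiLp.toLp_apply, Real.sqrt_sq_eq_abs,
      show (x - h) ^ 2 + (y - y) ^ 2 = (x - h) ^ 2 by ring] using this
  -- lower bound
  have hlbpt : ∀ p ∈ frontier F, |x - h| ≤ dist q p := by
    intro p hp
    obtain ⟨⟨hp1, hp2⟩, hp3⟩ := hfr p hp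
    rcases le_total x h with hxh | hxh
    · -- inside case
      rw [abs_of_nonpos (by linarith)]
      rcases hp3 with hp3 | hp3
      · -- slant case: |p 1| = tan ψ * p 0, i.e. c * |p 1| = s * p 0
        have habs : |p 1| = Real.tan ψ * p 0 := le_antisymm hp1 hp3
        have hcabs : c * |p 1| = s * p 0 := by
          rw [habs, htan]; field_simp
        have hp0nn : 0 ≤ p 0 := by nlinarith [abs_nonneg (p 1)]
        have hy2' := hmul y hy2 hxh
        have hy1' := hmul (-y) (by linarith) hxh
        rw [dist_eq_two, ← hxdef, ← hydef, show -(x - h) = h - x by ring]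
        rcases abs_cases (p 1) with ⟨he, _⟩ | ⟨he, _⟩
        · -- c * p 1 = s * p 0
          have hcp : c * p 1 = s * p 0 := by rw [← he, hcabs]
          refine (Real.le_sqrt (by linarith) (by positivity)).mpr ?_
          nlinarith [sq_nonneg (c * (x - p 0) + s * (y - p 1)),
            sq_nonneg (s * (x - p 0) - c * (y - p 1))]
        · have hcp : c * p 1 = -(s * p 0) := by
            rw [← hcabs, he]; ring
          refine (Real.le_sqrt (by linarith) (by positivity)).mpr ?_
          nlinarith [sq_nonneg (c * (x - p 0) - s * (y - p 1)),
            sq_nonneg (s * (x - p 0) + c * (y - p 1))]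
      · -- base case: p 0 = h
        have hph : p 0 = h := le_antisymm hp2 hp3
        calc -(x - h) = |x - p 0| := by
              rw [hph, abs_of_nonpos (by linarith : x - h ≤ 0)]
          _ ≤ dist q p := hqdist p
    · -- outside case: any frontier point has p 0 ≤ h ≤ x
      rw [abs_of_nonneg (by linarith)]
      calc x - h ≤ |x - p 0| := by
            rw [abs_of_nonneg (by linarith)]; linarith
        _ ≤ dist q p := hqdist p
  have hlb : |x - h| ≤ Metric.infDist q (frontier F) := by
    by_contra hcon
    push_neg at hcon
    obtain ⟨p, hp, hd⟩ := (Metric.infDist_lt_iff hne).mp hcon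
    exact absurd hd (not_lt.mpr (hlbpt p hp))
  have hdist : Metric.infDist q (frontier F) = |x - h| := le_antisymm hub hlb
  -- the membership iff
  have hiff : x - h ≤ 0 ↔ q ∈ F := by
    constructor
    · intro hxh
      have hxh' : x ≤ h := by linarith
      rw [hF]
      simp only [Set.mem_setOf_eq, ← hxdef, ← hydef]
      refine ⟨?_, hxh'⟩
      have k1 := hmul y hy2 hxh'
      have k2 := hmul (-y) (by linarith) hxh'
      rw [htan, div_mul_eq_mul_div, le_div_iff₀ hc0]
      rcases abs_cases y with ⟨hy, _⟩ | ⟨hy, _⟩ <;> rw [hy] <;> nlinarith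
    · intro hqF
      rw [hF] at hqF
      simp only [Set.mem_setOf_eq, ← hxdef, ← hydef] at hqF
      linarith [hqF.2]
  refine ⟨hdist, hiff, ?_⟩
  -- inner product and norm computations
  have hinner : ⟪a₃, q⟫ = x := by
    rw [ha₃, PiLp.inner_apply, Fin.sum_univ_two]
    simp [WithLp.equiv_symm_apply, PiLp.toLp_apply, RCLike.inner_apply, ← hxdef]
  have hnorm : ‖a₃‖ = 1 := by
    rw [ha₃, EuclideanSpace.norm_eq, Fin.sum_univ_two]
    simp [WithLp.equiv_symm_apply, PiLp.toLp_apply]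
  rw [hinner, hnorm, hb₃, div_one]
  unfold signedDistSet
  split_ifs with hqF
  · have hxh : x - h ≤ 0 := hiff.mpr hqF
    rw [hdist, abs_of_nonpos hxh]; ring
  · have hxh : ¬(x - h ≤ 0) := fun hcon => hqF (hiff.mp hcon)
    push_neg at hxh
    rw [hdist, abs_of_pos hxh]; ring
end

section
/- Signed distance of the 2-D cone, upper corner region: fix h > 0 and ψ ∈ (0, π/2), and define l̄₁(x) = −(x − h)/tan ψ + h·tan ψ for x ≤ h and l̄₁(x) = h·tan ψ for x ≥ h. Let P₁ = {(x, y) ∈ ℝ² : y > l̄₁(x)}. Then every q ∈ P₁ lies outside F, and the distance from q to the frontier ∂F satisfies infDist(q, ∂F) = ‖q − q₁‖, where q₁ = (h, h·tan ψ) is the upper corner of the triangle F. -/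
/-- Signed distance of the 2-D cone, upper corner region `P₁`: every
`q ∈ P₁ = {(x,y) : y > l̄₁(x)}` lies outside the triangle `F`, and the distance from
`q` to the frontier of `F` is `‖q − q₁‖`, where `q₁ = (h, h·tan ψ)` is the upper
corner of `F`. -/
theorem sdf_cone_upper_corner_region
    (h ψ : ℝ) (hh : 0 < h) (hψ : ψ ∈ Set.Ioo 0 (Real.pi / 2))
    (F : Set (EuclideanSpace ℝ (Fin 2)))
    (hF : F = {q : EuclideanSpace ℝ (Fin 2) | |q 1| ≤ Real.tan ψ * q 0 ∧ q 0 ≤ h})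
    (lbar : ℝ → ℝ)
    (hlbar₁ : ∀ x ≤ h, lbar x = -(x - h) / Real.tan ψ + h * Real.tan ψ)
    (hlbar₂ : ∀ x, h ≤ x → lbar x = h * Real.tan ψ)
    (P₁ : Set (EuclideanSpace ℝ (Fin 2)))
    (hP₁ : P₁ = {q : EuclideanSpace ℝ (Fin 2) | lbar (q 0) < q 1})
    (q₁ : EuclideanSpace ℝ (Fin 2))
    (hq₁ : q₁ = (WithLp.equiv 2 (Fin 2 → ℝ)).symm ![h, h * Real.tan ψ]) :
    ∀ q ∈ P₁, q ∉ F ∧ Metric.infDist q (frontier F) = ‖q - q₁‖ := by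
  set t := Real.tan ψ with htdef
  have ht0 : 0 < t := Real.tan_pos_of_pos_of_lt_pi_div_two hψ.1 hψ.2
  have hq10 : q₁ 0 = h := by
    simp [hq₁, WithLp.equiv_symm_apply, PiLp.toLp_apply]
  have hq11 : q₁ 1 = h * t := by
    simp [hq₁, WithLp.equiv_symm_apply, PiLp.toLp_apply]
  have hnorm : ∀ v : EuclideanSpace ℝ (Fin 2),
      ‖v‖ = Real.sqrt ((v 0) ^ 2 + (v 1) ^ 2) := by
    intro v
    rw [EuclideanSpace.norm_eq, Fin.sum_univ_two]
    simp [sq_abs]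
  -- F is closed
  have hFclosed : IsClosed F := by
    rw [hF]
    apply IsClosed.inter
    · exact isClosed_le (continuous_abs.comp (EuclideanSpace.proj (1 : Fin 2)).continuous)
        (continuous_const.mul (EuclideanSpace.proj (0 : Fin 2)).continuous)
    · exact isClosed_le (EuclideanSpace.proj (0 : Fin 2)).continuous continuous_const
  -- q₁ ∈ F
  have hq₁F : q₁ ∈ F := by
    rw [hF]
    constructor
    · rw [hq11, abs_of_nonneg (by positivity)]; nlinarith
    · rw [hq10]
  -- q₁ ∈ frontier F
  have hq₁fr : q₁ ∈ frontier F := by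
    rw [hFclosed.frontier_eq]
    refine ⟨hq₁F, fun hint => ?_⟩
    rw [mem_interior_iff_mem_nhds, Metric.mem_nhds_iff] at hint
    obtain ⟨ε, hε, hball⟩ := hint
    set p : EuclideanSpace ℝ (Fin 2) := q₁ + (ε / 2) • EuclideanSpace.single 0 1 with hp
    have hpb : p ∈ Metric.ball q₁ ε := by
      rw [Metric.mem_ball, dist_eq_norm]
      have : p - q₁ = (ε / 2) • EuclideanSpace.single (0 : Fin 2) (1 : ℝ) := by
        rw [hp]; abel
      rw [this, norm_smul, EuclideanSpace.norm_single]
      simp [abs_of_pos hε]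
      linarith
    have hp0 : p 0 = h + ε / 2 := by
      rw [hp]
      simp [EuclideanSpace.single_apply, hq10]
    have := hball hpb
    rw [hF] at this
    have := this.2
    rw [hp0] at this
    linarith
  intro q hq
  rw [hP₁] at hq
  set a := q 0 with ha
  set b := q 1 with hb
  have hbP : lbar a < b := hq
  have hbt : h * t < b := by
    rcases le_total a h with hah | hah
    · have h1 := hlbar₁ a hah
      rw [h1] at hbP
      have : 0 ≤ -(a - h) / t := by
        apply div_nonneg (by linarith) (le_of_lt ht0)
      linarith
    · rwa [hlbar₂ a hah] at hbP
  have hkey : 0 ≤ (a - h) + t * (b - h * t) := by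
    rcases le_total a h with hah | hah
    · have h1 := hlbar₁ a hah
      rw [h1] at hbP
      have h2 : -(a - h) / t < b - h * t := by linarith
      have h3 : -(a - h) < (b - h * t) * t := (div_lt_iff₀ ht0).mp h2
      nlinarith
    · nlinarith
  -- q ∉ F
  have hqF : q ∉ F := by
    rw [hF]
    rintro ⟨h1, h2⟩
    have : b ≤ t * a := le_trans (le_abs_self b) h1
    nlinarith
  refine ⟨hqF, ?_⟩
  -- key distance bound for all p ∈ F
  have hbound : ∀ p ∈ F, ‖q - q₁‖ ≤ dist q p := by
    intro p hp
    rw [hF] at hp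
    obtain ⟨hp1, hp0⟩ := hp
    have hp1' : p 1 ≤ t * p 0 := le_trans (le_abs_self _) hp1
    rw [dist_eq_norm, hnorm, hnorm]
    apply Real.sqrt_le_sqrt
    have e1 : (q - q₁) 0 = a - h := by simp [hq10, ha]
    have e2 : (q - q₁) 1 = b - h * t := by simp [hq11, hb]
    have e3 : (q - p) 0 = a - p 0 := by simp [ha]
    have e4 : (q - p) 1 = b - p 1 := by simp [hb]
    rw [e1, e2, e3, e4]
    have hA : p 1 - h * t ≤ t * (p 0 - h) := by nlinarith
    have hB : (b - h * t) * (p 1 - h * t) ≤ (b - h * t) * (t * (p 0 - h)) :=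
      mul_le_mul_of_nonneg_left hA (by linarith)
    have hC : (p 0 - h) * ((a - h) + t * (b - h * t)) ≤ 0 :=
      mul_nonpos_of_nonpos_of_nonneg (by linarith) hkey
    nlinarith [sq_nonneg (p 0 - h), sq_nonneg (p 1 - h * t)]
  have hfrsub : frontier F ⊆ F := by
    rw [hFclosed.frontier_eq]; exact Set.diff_subset
  apply le_antisymm
  · have := Metric.infDist_le_dist_of_mem (x := q) hq₁fr
    rwa [dist_eq_norm] at this
  · by_contra hlt
    push_neg at hlt
    obtain ⟨y, hy, hdy⟩ := (Metric.infDist_lt_iff ⟨q₁, hq₁fr⟩).mp hlt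
    exact absurd (hbound y (hfrsub hy)) (not_le.mpr hdy)
end

section
/- Signed distance of the 2-D cone, apex region: fix h > 0 and ψ ∈ (0, π/2), and let P₃ = {(x, y) ∈ ℝ² : x ≤ 0 and |y| < −x/tan ψ}. Then every nonzero q ∈ P₃ lies outside F, and the distance from q to the frontier ∂F satisfies infDist(q, ∂F) = ‖q‖, i.e., the closest boundary point of F is the apex (0, 0). -/
/-- Signed distance of the 2-D cone, apex region `P₃`: every nonzero
`q ∈ P₃ = {(x,y) : x ≤ 0, |y| < −x/tan ψ}` lies outside the triangle `F`, and the
distance from `q` to the frontier of `F` is `‖q‖`, i.e. the closest boundary point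
of `F` is the apex `(0, 0)`. -/
theorem sdf_cone_apex_region
    (h ψ : ℝ) (hh : 0 < h) (hψ : ψ ∈ Set.Ioo 0 (Real.pi / 2))
    (F : Set (EuclideanSpace ℝ (Fin 2)))
    (hF : F = {q : EuclideanSpace ℝ (Fin 2) | |q 1| ≤ Real.tan ψ * q 0 ∧ q 0 ≤ h})
    (P₃ : Set (EuclideanSpace ℝ (Fin 2)))
    (hP₃ : P₃ = {q : EuclideanSpace ℝ (Fin 2) | q 0 ≤ 0 ∧ |q 1| < -(q 0) / Real.tan ψ}) :
    ∀ q ∈ P₃, q ≠ 0 → q ∉ F ∧ Metric.infDist q (frontier F) = ‖q‖ := by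
  obtain ⟨hψ0, hψ2⟩ := hψ
  have ht : 0 < Real.tan ψ := Real.tan_pos_of_pos_of_lt_pi_div_two hψ0 hψ2
  intro q hq hq0
  rw [hP₃] at hq
  obtain ⟨hqx, hqy⟩ := hq
  have hqyt : |q 1| * Real.tan ψ < -(q 0) := (lt_div_iff₀ ht).mp hqy
  -- q ∉ F
  have hqF : q ∉ F := by
    rw [hF]
    rintro ⟨h1, h2⟩
    have : Real.tan ψ * q 0 ≤ 0 := mul_nonpos_of_nonneg_of_nonpos ht.le hqx
    have hx0 : 0 < -(q 0) := lt_of_le_of_lt (mul_nonneg (abs_nonneg _) ht.le) hqyt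
    have : Real.tan ψ * q 0 < 0 := mul_neg_of_pos_of_neg ht (by linarith)
    linarith [abs_nonneg (q 1)]
  -- 0 ∈ F
  have h0F : (0 : EuclideanSpace ℝ (Fin 2)) ∈ F := by
    rw [hF]
    constructor <;> simp [hh.le]
  -- 0 ∈ frontier F
  have h0fr : (0 : EuclideanSpace ℝ (Fin 2)) ∈ frontier F := by
    rw [frontier_eq_closure_inter_closure]
    refine ⟨subset_closure h0F, ?_⟩
    rw [Metric.mem_closure_iff]
    intro ε hε
    refine ⟨EuclideanSpace.single 0 (-(ε/2)), ?_, ?_⟩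
    · rw [hF]
      intro ⟨h1, _⟩
      simp [EuclideanSpace.single_apply] at h1
      nlinarith
    · rw [dist_comm, dist_zero_right, EuclideanSpace.norm_single]
      rw [norm_neg, Real.norm_of_nonneg (by linarith)]
      linarith
  have hne : (frontier F).Nonempty := ⟨0, h0fr⟩
  -- key: every point of F has nonpositive inner product with q
  have hclose : ∀ p ∈ F, ‖q‖ ≤ dist q p := by
    intro p hp
    rw [hF] at hp
    obtain ⟨hp1, _⟩ := hp
    have hp0 : 0 ≤ p 0 := by
      have := (abs_nonneg (p 1)).trans hp1
      nlinarith
    have hinner : (inner ℝ q p : ℝ) ≤ 0 := by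
      have hinner_eq : (inner ℝ q p : ℝ) = q 0 * p 0 + q 1 * p 1 := by
        simp [PiLp.inner_apply, Fin.sum_univ_two, RCLike.inner_apply, mul_comm]
      rw [hinner_eq]
      have habs : q 1 * p 1 ≤ |q 1| * |p 1| := by
        calc q 1 * p 1 ≤ |q 1 * p 1| := le_abs_self _
        _ = |q 1| * |p 1| := abs_mul _ _
      nlinarith [mul_le_mul_of_nonneg_left hp1 (abs_nonneg (q 1)),
        mul_le_mul_of_nonneg_right hqyt.le hp0]
    have hsq : ‖q‖ ^ 2 ≤ ‖q - p‖ ^ 2 := by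
      rw [norm_sub_sq_real]
      nlinarith [sq_nonneg ‖p‖]
    rw [dist_eq_norm]
    nlinarith [norm_nonneg q, norm_nonneg (q - p)]
  refine ⟨hqF, le_antisymm ?_ ?_⟩
  · calc Metric.infDist q (frontier F) ≤ dist q 0 := Metric.infDist_le_dist_of_mem h0fr
    _ = ‖q‖ := by rw [dist_zero_right]
  · by_contra hlt
    push_neg at hlt
    obtain ⟨p, hp, hd⟩ := (Metric.infDist_lt_iff hne).mp hlt
    have hFc : IsClosed F := by
      rw [hF]
      have : {q : EuclideanSpace ℝ (Fin 2) | |q 1| ≤ Real.tan ψ * q 0 ∧ q 0 ≤ h}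
          = {q : EuclideanSpace ℝ (Fin 2) | |q 1| ≤ Real.tan ψ * q 0} ∩
            {q : EuclideanSpace ℝ (Fin 2) | q 0 ≤ h} := rfl
      rw [this]
      exact (isClosed_le (by fun_prop) (by fun_prop)).inter
        (isClosed_le (by fun_prop) continuous_const)
    linarith [hclose p (hFc.frontier_subset hp)]
end
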